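/- Minimal extrapolation is not additive: there exist μ_1, μ_2 ∈ M(𝕋), a finite subset Λ ⊂ ℤ, and minimal extrapolations ν_1 ∈ 𝓔(μ_1, Λ) and ν_2 ∈ 𝓔(μ_2, Λ), such that ν_1 + ν_2 ∉ 𝓔(μ_1 + μ_2, Λ). (For example, μ_1 = δ_0 + δ_{1/2}, μ_2 = −δ_0 − δ_{1/2}, Λ = {−1, 0, 1}, ν_1 = δ_0 + δ_{1/2}, ν_2 = −δ_{1/4} − δ_{3/4}.) -/

import Mathlib

/- Setting: `M(𝕋^d)`, the space of complex bounded Radon measures on the `d`-dimensional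
torus, is identified with the continuous dual of `C(𝕋^d, ℂ)` via the Riesz representation
theorem; the total variation norm corresponds to the operator norm. -/

open MeasureTheory Complex Real

noncomputable section

theorem Real.fact_zero_lt_one : Fact ((0 : ℝ) < 1) := ⟨one_pos⟩

attribute [local instance] Real.fact_zero_lt_one

/-- The `d`-dimensional torus `𝕋^d = (ℝ/ℤ)^d`. -/
abbrev Torus (d : ℕ) : Type := Fin d → AddCircle (1 : ℝ)

/-- The character `x ↦ e^{2πi m·x}` on the torus, for `m ∈ ℤ^d`. -/
def torusChar {d : ℕ} (m : Fin d → ℤ) : C(Torus d, ℂ) :=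
  ⟨fun x => ∏ i, fourier (m i) (x i), by
    refine continuous_finset_prod _ fun i _ => ?_
    exact (map_continuous (fourier (m i))).comp (continuous_apply i)⟩

/-- The space `M(𝕋^d)` of complex bounded Radon measures on the torus, identified (via the
Riesz representation theorem) with the continuous dual of `C(𝕋^d, ℂ)`; the total variation
norm is the operator norm. -/
abbrev TorusMeasure (d : ℕ) : Type := C(Torus d, ℂ) →L[ℂ] ℂ

/-- The Fourier coefficient `μ̂(m) = ∫_{𝕋^d} e^{-2πi m·x} dμ(x)`. -/
def mFourierCoeff {d : ℕ} (μ : TorusMeasure d) (m : Fin d → ℤ) : ℂ :=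
  μ (torusChar (-m))

/-- `ν` is an extrapolation of `μ` from `Λ` if `ν̂ = μ̂` on `Λ`. -/
def IsExtrapolation {d : ℕ} (μ : TorusMeasure d) (Λ : Finset (Fin d → ℤ))
    (ν : TorusMeasure d) : Prop :=
  ∀ m ∈ Λ, mFourierCoeff ν m = mFourierCoeff μ m

/-- `ε(μ,Λ) = inf {‖σ‖ : σ ∈ M(𝕋^d), σ̂ = μ̂ on Λ}`. -/
def minExtNorm {d : ℕ} (μ : TorusMeasure d) (Λ : Finset (Fin d → ℤ)) : ℝ :=
  sInf ((fun ν => ‖ν‖) '' {ν | IsExtrapolation μ Λ ν})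

/-- `ν` is a minimal extrapolation of `μ` from `Λ`, i.e. `ν ∈ 𝓔(μ,Λ)`:
an extrapolation whose total variation norm equals `ε(μ,Λ)`. -/
def IsMinimalExtrapolation {d : ℕ} (μ : TorusMeasure d) (Λ : Finset (Fin d → ℤ))
    (ν : TorusMeasure d) : Prop :=
  IsExtrapolation μ Λ ν ∧ ‖ν‖ = minExtNorm μ Λ

/-- `Γ(μ,Λ) = {m ∈ Λ : |μ̂(m)| = ε(μ,Λ)}`. -/
def gammaSet {d : ℕ} (μ : TorusMeasure d) (Λ : Finset (Fin d → ℤ)) : Set (Fin d → ℤ) :=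
  {m | m ∈ Λ ∧ ‖mFourierCoeff μ m‖ = minExtNorm μ Λ}

/-- The measure `ν` is supported in the set `S`: it annihilates every continuous
function vanishing on `S` (for closed `S` this says `supp(ν) ⊆ S`). -/
def SupportedIn {d : ℕ} (ν : TorusMeasure d) (S : Set (Torus d)) : Prop :=
  ∀ f : C(Torus d, ℂ), (∀ x ∈ S, f x = 0) → ν f = 0

/-- The pairing `⟨f,μ⟩ = ∫_{𝕋^d} f(x) conj(dμ(x)) = conj (μ (conj f))`. -/
def mPairing {d : ℕ} (f : C(Torus d, ℂ)) (μ : TorusMeasure d) : ℂ :=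
  starRingEnd ℂ (μ (star f))

/-- `C(𝕋^d;Λ)`: the subspace of trigonometric polynomials
`f(x) = ∑_{m ∈ Λ} a_m e^{2πi m·x}` with frequencies in `Λ`. -/
def trigPoly {d : ℕ} (Λ : Finset (Fin d → ℤ)) : Submodule ℂ C(Torus d, ℂ) :=
  Submodule.span ℂ (torusChar '' (Λ : Set (Fin d → ℤ)))

/-- For a continuous `g` with `‖g‖_∞ ≤ 1`, the assertion that `sign(ν) = g`
`ν`-almost everywhere, expressed through the standard equivalent condition
`⟨g,ν⟩ = ‖ν‖` (obtained by integrating the Radon–Nikodym identity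
`∫ f d|ν| = ∫ f conj(sign ν) dν` against `f = conj g` and using `|ν|(𝕋^d) = ‖ν‖`). -/
def SignEqAE {d : ℕ} (ν : TorusMeasure d) (g : C(Torus d, ℂ)) : Prop :=
  mPairing g ν = (‖ν‖ : ℂ)

/-- `ν` is a positive measure: it takes nonnegative real values on nonnegative real-valued
continuous functions. -/
def IsPositiveMeasure {d : ℕ} (ν : TorusMeasure d) : Prop :=
  ∀ f : C(Torus d, ℂ), (∀ x, (f x).im = 0 ∧ 0 ≤ (f x).re) → (ν f).im = 0 ∧ 0 ≤ (ν f).re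

/-- The Dirac measure `δ_x`: evaluation at `x`. -/
def diracM {d : ℕ} (x : Torus d) : TorusMeasure d :=
  ContinuousMap.evalCLM ℂ x

/-- The modulation `M_n ν`, defined by `d(M_n ν)(x) = e^{2πi n·x} dν(x)`. -/
def modulateM {d : ℕ} (n : Fin d → ℤ) (ν : TorusMeasure d) : TorusMeasure d :=
  ν.comp (ContinuousLinearMap.mul ℂ C(Torus d, ℂ) (torusChar n))

-- auxiliary lemmas
lemma torusChar_zero (d : ℕ) : torusChar (0 : Fin d → ℤ) = 1 := by
  ext x; simp [torusChar]

lemma diracM_apply {d : ℕ} (x : Torus d) (f : C(Torus d, ℂ)) : diracM x f = f x := rfl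

instance (d : ℕ) : Nonempty (Torus d) := ⟨fun _ => 0⟩

lemma norm_diracM {d : ℕ} (x : Torus d) : ‖diracM x‖ = 1 := by
  apply le_antisymm
  · exact ContinuousLinearMap.opNorm_le_bound _ zero_le_one fun f => by
      simpa [diracM_apply] using f.norm_coe_le_norm x
  · have h := (diracM x).le_opNorm (1 : C(Torus d, ℂ))
    simpa [diracM_apply] using h

lemma norm_mFourierCoeff_le {d : ℕ} (σ : TorusMeasure d) (m : Fin d → ℤ) :
    ‖mFourierCoeff σ m‖ ≤ ‖σ‖ := by
  have h := σ.le_opNorm (torusChar (-m))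
  have hn : ‖torusChar (-m)‖ ≤ 1 := by
    refine (ContinuousMap.norm_le _ zero_le_one).mpr fun x => ?_
    simp only [torusChar, ContinuousMap.coe_mk]
    calc ‖∏ i, fourier (-m i) (x i)‖ = ∏ i, ‖(fourier (-m i) (x i) : ℂ)‖ := norm_prod _ _
      _ ≤ 1 := by simp [Circle.norm_coe]
  calc ‖mFourierCoeff σ m‖ ≤ ‖σ‖ * ‖torusChar (-m)‖ := h
    _ ≤ ‖σ‖ * 1 := by gcongr
    _ = ‖σ‖ := mul_one _

lemma mFourierCoeff_diracM_zero {d : ℕ} (x : Torus d) :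
    mFourierCoeff (diracM x) 0 = 1 := by
  rw [mFourierCoeff, neg_zero, torusChar_zero, diracM_apply]
  rfl

lemma minExtNorm_eq_one {d : ℕ} (μ : TorusMeasure d) (hμ : ‖mFourierCoeff μ 0‖ = 1)
    (ν : TorusMeasure d) (hν : IsExtrapolation μ {0} ν) (hνn : ‖ν‖ = 1) :
    minExtNorm μ {0} = 1 := by
  apply le_antisymm
  · refine csInf_le ⟨0, ?_⟩ ⟨ν, hν, hνn⟩
    rintro r ⟨σ, -, rfl⟩; exact norm_nonneg σ
  · refine le_csInf ⟨1, ν, hν, hνn⟩ ?_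
    rintro r ⟨σ, hσ, rfl⟩
    have h0 : mFourierCoeff σ 0 = mFourierCoeff μ 0 := hσ 0 (Finset.mem_singleton_self _)
    calc (1:ℝ) = ‖mFourierCoeff σ 0‖ := by rw [h0, hμ]
      _ ≤ ‖σ‖ := norm_mFourierCoeff_le σ 0


/-- **Proposition 2.8(a).** Minimal extrapolation is not additive: there are
`μ₁, μ₂ ∈ M(𝕋)`, a finite `Λ ⊂ ℤ`, and `ν₁ ∈ 𝓔(μ₁,Λ)`, `ν₂ ∈ 𝓔(μ₂,Λ)` with
`ν₁ + ν₂ ∉ 𝓔(μ₁ + μ₂, Λ)`. -/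
theorem minimalExtrapolation_not_additive :
    ∃ (μ₁ μ₂ : TorusMeasure 1) (Λ : Finset (Fin 1 → ℤ)) (ν₁ ν₂ : TorusMeasure 1),
      IsMinimalExtrapolation μ₁ Λ ν₁ ∧ IsMinimalExtrapolation μ₂ Λ ν₂ ∧
      ¬ IsMinimalExtrapolation (μ₁ + μ₂) Λ (ν₁ + ν₂) := by
  classical
  set x₀ : Torus 1 := fun _ => (0 : AddCircle (1:ℝ)) with hx₀
  set x₁ : Torus 1 := fun _ => (((1:ℝ)/2 : ℝ) : AddCircle (1:ℝ)) with hx₁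
  refine ⟨diracM x₀, -diracM x₀, {0}, diracM x₀, -diracM x₁, ?_, ?_, ?_⟩
  · constructor
    · intro m _; rfl
    · rw [norm_diracM]
      exact (minExtNorm_eq_one _ (by rw [mFourierCoeff_diracM_zero]; simp) _
        (fun m _ => rfl) (norm_diracM x₀)).symm
  · have hext : IsExtrapolation (-diracM x₀) {0} (-diracM x₁) := by
      intro m hm
      rw [Finset.mem_singleton] at hm
      subst hm
      show (-diracM x₁) (torusChar (-0)) = (-diracM x₀) (torusChar (-0))
      simp only [ContinuousLinearMap.neg_apply, neg_zero, torusChar_zero]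
      rfl
    constructor
    · exact hext
    · rw [norm_neg, norm_diracM]
      refine (minExtNorm_eq_one _ ?_ _ hext (by rw [norm_neg, norm_diracM])).symm
      show ‖(-diracM x₀) (torusChar (-0))‖ = 1
      simp only [ContinuousLinearMap.neg_apply, neg_zero, torusChar_zero]
      show ‖-(1:ℂ)‖ = 1
      simp
  · rintro ⟨-, hnorm⟩
    have hsum : diracM x₀ + -diracM x₀ = 0 := add_neg_cancel _
    have hmin0 : minExtNorm (diracM x₀ + -diracM x₀) {0} = 0 := by
      apply le_antisymm
      · refine csInf_le ⟨0, ?_⟩ ⟨0, fun m _ => by simp [mFourierCoeff], norm_zero⟩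
        rintro r ⟨σ, -, rfl⟩; exact norm_nonneg σ
      · refine le_csInf ⟨0, 0, fun m _ => by simp [mFourierCoeff], norm_zero⟩ ?_
        rintro r ⟨σ, -, rfl⟩; exact norm_nonneg σ
    rw [hmin0] at hnorm
    have hz : diracM x₀ + -diracM x₁ = 0 := by
      exact (ContinuousLinearMap.opNorm_zero_iff (diracM x₀ + -diracM x₁)).mp hnorm
    have happ := congrArg (fun ν : TorusMeasure 1 => ν (torusChar (fun _ => (1:ℤ)))) hz
    simp only [ContinuousLinearMap.add_apply, ContinuousLinearMap.neg_apply,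
      ContinuousLinearMap.zero_apply, diracM_apply] at happ
    have h0 : torusChar (fun _ => (1:ℤ)) x₀ = 1 := by
      simp [torusChar, hx₀, fourier_eval_zero]
    have h1 : torusChar (fun _ => (1:ℤ)) x₁ = -1 := by
      simp only [torusChar, ContinuousMap.coe_mk, hx₁, Fin.prod_univ_one]
      rw [fourier_coe_apply]
      rw [show 2 * (π:ℂ) * I * ((1:ℤ):ℂ) * (((1:ℝ)/2 : ℝ):ℂ) / ((1:ℝ):ℂ) = π * I by
        push_cast; ring]
      exact Complex.exp_pi_mul_I
    rw [h0, h1] at happ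
    norm_num at happ

end
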